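/- (Observation 1.) Let (l_n) and (m_n) be sequences of positive integers with l_n → ∞ and m_n → ∞, set U_n = l_n · m_n, partition a set of cardinality U_n into l_n buckets of cardinality m_n each, and let Y_n be a uniformly random l_n-element subset. Then the probability that at least l_n/3 of the buckets contain exactly one element of Y_n tends to 1 as n → ∞. -/

import Mathlib

open Finset Filter

lemma step1 (n k : ℕ) : (n+1) * n.choose k = (n+1).choose k * (n+1-k) := by
  rw [Nat.add_one_mul_choose_eq, Nat.choose_succ_right_eq]

lemma choose_prod (a k : ℕ) : ∀ s, k + s ≤ a →
    (a - s).choose k * ∏ t ∈ range s, (a - t) = a.choose k * ∏ t ∈ range s, (a - k - t) := by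
  intro s
  induction s with
  | zero => simp
  | succ s ih =>
    intro h
    rw [prod_range_succ, prod_range_succ]
    have h1 : k + s ≤ a := by omega
    have h2 : a - (s+1) + 1 = a - s := by omega
    have h3 : (a - (s+1) + 1) * (a - (s+1)).choose k = (a - (s+1) + 1).choose k * (a - (s+1) + 1 - k) := step1 _ _
    have h5 : a - (s+1) + 1 - k = a - s - k := by omega
    rw [h2] at h3
    have h4 : a - s - k = a - k - s := by omega
    calc (a - (s+1)).choose k * ((∏ t ∈ range s, (a - t)) * (a - s))
        = ((a-s) * (a - (s+1)).choose k) * ∏ t ∈ range s, (a - t) := by ring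
      _ = ((a-s).choose k * (a - s - k)) * ∏ t ∈ range s, (a - t) := by rw [h3]
      _ = (a - k - s) * ((a-s).choose k * ∏ t ∈ range s, (a - t)) := by rw [← h4]; ring
      _ = (a - k - s) * (a.choose k * ∏ t ∈ range s, (a - k - t)) := by rw [ih h1]
      _ = a.choose k * ((∏ t ∈ range s, (a - k - t)) * (a - k - s)) := by ring

lemma ratio_eq (M l' : ℕ) (hM : 1 ≤ M) (hl : 1 ≤ l') :
    ((M : ℝ) * ((M * l' - M).choose (l' - 1) : ℝ)) / ((M * l').choose l' : ℝ)
      = ∏ t ∈ range (M - 1), (((M : ℝ) * l' - l' - t) / ((M : ℝ) * l' - 1 - t)) := by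
  set a := M * l' with ha
  set k := l' - 1 with hk
  have hMa : M ≤ a := Nat.le_mul_of_pos_right _ hl
  have hla : l' ≤ a := Nat.le_mul_of_pos_left _ hM
  have hadd : k + M ≤ a := by
    have h1 : (M-1) * l' = M*l' - l' := by rw [Nat.sub_mul, one_mul]
    have h2 : M - 1 ≤ (M-1) * l' := Nat.le_mul_of_pos_right _ hl
    omega
  have E := choose_prod a k M hadd
  have c1 : ((∏ t ∈ range M, (a - t) : ℕ) : ℝ) = ∏ t ∈ range M, ((a:ℝ) - t) := by
    rw [Nat.cast_prod]
    refine prod_congr rfl ?_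
    intro t ht
    have htM : t ≤ a := le_trans (mem_range.mp ht).le hMa
    rw [Nat.cast_sub htM]
  have c2 : ((∏ t ∈ range M, (a - k - t) : ℕ) : ℝ) = ∏ t ∈ range M, ((a:ℝ) - k - t) := by
    rw [Nat.cast_prod]
    refine prod_congr rfl ?_
    intro t ht
    have h1 : k ≤ a := by omega
    have h2 : t ≤ a - k := by have := (mem_range.mp ht); omega
    rw [Nat.cast_sub h2, Nat.cast_sub h1]
  have Ecast : ((a - M).choose k : ℝ) * ∏ t ∈ range M, ((a : ℝ) - t)
      = (a.choose k : ℝ) * ∏ t ∈ range M, ((a:ℝ) - k - t) := by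
    have E' := congrArg (fun x : ℕ => (x : ℝ)) E
    simp only [Nat.cast_mul] at E'
    rw [c1, c2] at E'
    exact E'
  have hkr : (k:ℝ) = (l' : ℝ) - 1 := by rw [hk]; push_cast [hl]; ring
  have hM1 : M - 1 + 1 = M := by omega
  have d1 : ∏ t ∈ range M, ((a:ℝ) - t)
      = (∏ t ∈ range (M-1), ((a:ℝ) - 1 - t)) * (a:ℝ) := by
    rw [← hM1, prod_range_succ']
    congr 1
    · refine prod_congr rfl ?_
      intro t _
      push_cast
      ring
    · simp
  have d2 : ∏ t ∈ range M, ((a:ℝ) - k - t)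
      = (∏ t ∈ range (M-1), ((a:ℝ) - l' - t)) * ((a:ℝ) - k) := by
    rw [← hM1, prod_range_succ']
    congr 1
    · refine prod_congr rfl ?_
      intro t _
      rw [hkr]
      push_cast
      ring
    · simp
  rw [d1, d2] at Ecast
  have crel : ((a.choose l' : ℕ) : ℝ) * l' = (a.choose k : ℝ) * ((a:ℝ) - k) := by
    have h0 := Nat.choose_succ_right_eq a k
    have hkl : k + 1 = l' := by omega
    rw [hkl] at h0
    have E' := congrArg (fun x : ℕ => (x : ℝ)) h0
    simp only [Nat.cast_mul] at E'
    rw [Nat.cast_sub (by omega : k ≤ a)] at E'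
    rw [← hkl]
    push_cast
    rw [← hkl] at E'
    push_cast at E'
    linarith [E']
  have hMl : (M:ℝ) * (l':ℝ) = ((a:ℕ):ℝ) := by rw [ha]; push_cast; ring
  have hD : ∀ t ∈ range (M-1), (0:ℝ) < (a:ℝ) - 1 - t := by
    intro t ht
    have h1 : t + 2 ≤ a := by have := mem_range.mp ht; omega
    have h2 : (t:ℝ) + 2 ≤ (a:ℝ) := by exact_mod_cast h1
    linarith
  have hPd : (0:ℝ) < ∏ t ∈ range (M-1), ((a:ℝ) - 1 - t) := prod_pos hD
  have hCapl : (0:ℝ) < (a.choose l' : ℝ) := by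
    exact_mod_cast Nat.choose_pos hla
  have hane : (0:ℝ) < (a:ℝ) := by
    have : 0 < a := by positivity
    exact_mod_cast this
  have hlne : (0:ℝ) < (l':ℝ) := by exact_mod_cast hl
  rw [hMl, prod_div_distrib, div_eq_div_iff hCapl.ne' hPd.ne']
  have key : (↑M * ↑((a - M).choose k) * ∏ t ∈ range (M-1), ((a:ℝ) - 1 - t)) * ((a:ℝ) * l')
      = ((∏ t ∈ range (M-1), ((a:ℝ) - l' - t)) * ↑(a.choose l')) * ((a:ℝ) * l') := by
    linear_combination (↑M * (l':ℝ)) * Ecast - ((a:ℝ) * (∏ t ∈ range (M-1), ((a:ℝ) - l' - t))) * crel + ((a.choose k : ℝ) * (∏ t ∈ range (M-1), ((a:ℝ) - l' - t)) * ((a:ℝ) - k)) * hMl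
  exact mul_right_cancel₀ (by positivity) key

lemma pow_diff_le (x y : ℝ) (hy : 0 ≤ y) (hxy : y ≤ x) (hx : x ≤ 1) (k : ℕ) :
    x^k - y^k ≤ k*(x-y) := by
  induction k with
  | zero => simp
  | succ k ih =>
    have h1 : y^k ≤ 1 := pow_le_one₀ hy (hxy.trans hx)
    have hdk : y^k ≤ x^k := pow_le_pow_left₀ hy hxy k
    rw [pow_succ, pow_succ]
    push_cast
    nlinarith [mul_nonneg (sub_nonneg.mpr hx) (sub_nonneg.mpr hdk),
      mul_nonneg (sub_nonneg.mpr h1) (sub_nonneg.mpr hxy), ih]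

lemma factor_lb (M l' t : ℕ) (hM : 1 ≤ M) (hl : 1 ≤ l') (ht : t < M - 1) :
    1 - 1/(M:ℝ) ≤ ((M:ℝ)*l' - l' - t)/((M:ℝ)*l' - 1 - t) := by
  have hMr : (1:ℝ) ≤ (M:ℝ) := by exact_mod_cast hM
  have hlr : (1:ℝ) ≤ (l':ℝ) := by exact_mod_cast hl
  have htr : (t:ℝ) ≤ (M:ℝ) - 2 := by
    have h : t + 2 ≤ M := by omega
    have := (Nat.cast_le (α := ℝ)).mpr h
    push_cast at this; linarith
  have htr0 : (0:ℝ) ≤ (t:ℝ) := Nat.cast_nonneg t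
  have hd : (0:ℝ) < (M:ℝ)*l' - 1 - t := by nlinarith
  have hMpos : (0:ℝ) < (M:ℝ) := by linarith
  rw [le_div_iff₀ hd]
  have : (1 - 1/(M:ℝ)) * ((M:ℝ)*l' - 1 - t) * (M:ℝ) = ((M:ℝ)-1) * ((M:ℝ)*l' - 1 - t) := by
    field_simp
  nlinarith [this]

lemma factor_ub (M l' t : ℕ) (hM : 1 ≤ M) (hl : 1 ≤ l') (ht : t < M - 1) :
    ((M:ℝ)*l' - l' - t)/((M:ℝ)*l' - 1 - t) ≤ 1 - ((l':ℝ)-1)/((M:ℝ)*l') := by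
  have hMr : (1:ℝ) ≤ (M:ℝ) := by exact_mod_cast hM
  have hlr : (1:ℝ) ≤ (l':ℝ) := by exact_mod_cast hl
  have htr : (t:ℝ) ≤ (M:ℝ) - 2 := by
    have h : t + 2 ≤ M := by omega
    have := (Nat.cast_le (α := ℝ)).mpr h
    push_cast at this; linarith
  have htr0 : (0:ℝ) ≤ (t:ℝ) := Nat.cast_nonneg t
  have hd : (0:ℝ) < (M:ℝ)*l' - 1 - t := by nlinarith
  have hd2 : (0:ℝ) < (M:ℝ)*l' := by nlinarith
  rw [div_le_iff₀ hd]
  have expand : (1 - ((l':ℝ)-1)/((M:ℝ)*l')) = ((M:ℝ)*l' - l' + 1)/((M:ℝ)*l') := by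
    field_simp; ring
  rw [expand, div_mul_eq_mul_div, le_div_iff₀ hd2]
  nlinarith [mul_nonneg (sub_nonneg.mpr hlr) (by linarith : (0:ℝ) ≤ (t:ℝ)+1)]

lemma const_lb (M : ℕ) (hM : 2 ≤ M) : (11:ℝ)/30 ≤ (1 - 1/(M:ℝ))^(M-1) := by
  have hMr : (2:ℝ) ≤ (M:ℝ) := by exact_mod_cast hM
  have hm1 : (1:ℝ) ≤ (M:ℝ) - 1 := by linarith
  set x : ℝ := 1/((M:ℝ)-1) with hx
  have hx0 : 0 < x := by positivity
  have hexp : 1 + x ≤ Real.exp x := by linarith [Real.add_one_le_exp x]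
  have h1x : 0 < 1 + x := by linarith
  have key : Real.exp (-x) ≤ 1 - 1/(M:ℝ) := by
    rw [Real.exp_neg]
    have h2 : (Real.exp x)⁻¹ ≤ (1+x)⁻¹ := by
      apply inv_anti₀ h1x hexp
    have h3 : (1+x)⁻¹ = 1 - 1/(M:ℝ) := by
      rw [hx]
      field_simp
      ring
    linarith
  have hpow : Real.exp (-1) ≤ (1 - 1/(M:ℝ))^(M-1) := by
    have hcast : ((M-1 : ℕ) : ℝ) = (M:ℝ) - 1 := by
      have : 1 ≤ M := by omega
      push_cast [this]; ring
    have e1 : Real.exp (-x) ^ (M-1) = Real.exp (((M-1:ℕ):ℝ) * (-x)) := by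
      rw [← Real.exp_nat_mul]
    have e2 : ((M-1:ℕ):ℝ) * (-x) = -1 := by
      rw [hcast, hx]
      field_simp
    calc Real.exp (-1) = Real.exp (-x) ^ (M-1) := by rw [e1, e2]
      _ ≤ (1 - 1/(M:ℝ))^(M-1) := by
          apply pow_le_pow_left₀ (Real.exp_pos _).le key
  have hfin : (11:ℝ)/30 ≤ Real.exp (-1) := by
    rw [Real.exp_neg]
    have h1 : Real.exp 1 < 2.7182818286 := Real.exp_one_lt_d9
    have h2 : (0:ℝ) < Real.exp 1 := Real.exp_pos 1
    rw [le_inv_comm₀ (by norm_num) h2]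
    have : (2.7182818286 : ℝ) ≤ (11/30 : ℝ)⁻¹ := by norm_num
    linarith
  linarith

lemma prod_lb (M l' : ℕ) (hM : 1 ≤ M) (hl : 1 ≤ l') :
    (1 - 1/(M:ℝ))^(M-1) ≤ ∏ t ∈ range (M-1), (((M:ℝ)*l' - l' - t)/((M:ℝ)*l' - 1 - t)) := by
  have hMr : (1:ℝ) ≤ (M:ℝ) := by exact_mod_cast hM
  calc (1 - 1/(M:ℝ))^(M-1) = ∏ _t ∈ range (M-1), (1 - 1/(M:ℝ)) := by
        rw [prod_const, card_range]
    _ ≤ _ := by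
        apply Finset.prod_le_prod
        · intro t _
          have : 1/(M:ℝ) ≤ 1 := by
            rw [div_le_one (by linarith)]; linarith
          linarith
        · intro t ht
          exact factor_lb M l' t hM hl (mem_range.mp ht)

lemma prod_ub (M l' : ℕ) (hM : 1 ≤ M) (hl : 1 ≤ l') :
    ∏ t ∈ range (M-1), (((M:ℝ)*l' - l' - t)/((M:ℝ)*l' - 1 - t))
      ≤ (1 - ((l':ℝ)-1)/((M:ℝ)*l'))^(M-1) := by
  calc (∏ t ∈ range (M-1), (((M:ℝ)*l' - l' - t)/((M:ℝ)*l' - 1 - t)))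
      ≤ ∏ _t ∈ range (M-1), (1 - ((l':ℝ)-1)/((M:ℝ)*l')) := by
        apply Finset.prod_le_prod
        · intro t ht
          have h1 := factor_lb M l' t hM hl (mem_range.mp ht)
          have hMr : (1:ℝ) ≤ (M:ℝ) := by exact_mod_cast hM
          have : 1/(M:ℝ) ≤ 1 := by rw [div_le_one (by linarith)]; linarith
          linarith
        · intro t ht
          exact factor_ub M l' t hM hl (mem_range.mp ht)
    _ = _ := by rw [prod_const, card_range]

/-- The number of buckets (from the family `B`) containing exactly one element of `Y`. -/
noncomputable def numSingleBuckets {Ω : Type*} [DecidableEq Ω] {L : ℕ}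
    (B : Fin L → Finset Ω) (Y : Finset Ω) : ℕ :=
  (Finset.univ.filter (fun i : Fin L => (Y ∩ B i).card = 1)).card


variable {Ω : Type*} [Fintype Ω] [DecidableEq Ω]

lemma count_fixed (D R : Finset Ω) (hR : R ⊆ D) (L : ℕ) (hL : R.card ≤ L) :
    (((univ : Finset Ω).powersetCard L).filter (fun Y => Y ∩ D = R)).card
      = (Fintype.card Ω - D.card).choose (L - R.card) := by
  have key : (((univ : Finset Ω).powersetCard L).filter (fun Y => Y ∩ D = R)).card
      = ((univ \ D).powersetCard (L - R.card)).card := by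
    apply card_nbij' (fun Y => Y \ D) (fun Z => R ∪ Z)
    · intro Y hY
      simp only [mem_coe] at hY ⊢
      rw [mem_filter, mem_powersetCard] at hY
      obtain ⟨⟨_, hcard⟩, hYD⟩ := hY
      rw [mem_powersetCard]
      refine ⟨fun x hx => ?_, ?_⟩
      · rw [Finset.mem_sdiff] at hx ⊢
        exact ⟨mem_univ x, hx.2⟩
      · have h1 := card_inter_add_card_sdiff Y D
        rw [hYD, hcard] at h1
        omega
    · intro Z hZ
      simp only [mem_coe] at hZ ⊢
      rw [mem_powersetCard] at hZ
      obtain ⟨hZsub, hZcard⟩ := hZ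
      have hdisj : Disjoint R Z := by
        rw [disjoint_left]
        intro x hxR hxZ
        have := hZsub hxZ
        rw [Finset.mem_sdiff] at this
        exact this.2 (hR hxR)
      rw [mem_filter, mem_powersetCard]
      refine ⟨⟨subset_univ _, ?_⟩, ?_⟩
      · rw [card_union_of_disjoint hdisj, hZcard]
        omega
      · rw [union_inter_distrib_right]
        have h1 : R ∩ D = R := inter_eq_left.mpr hR
        have h2 : Z ∩ D = ∅ := by
          rw [← disjoint_iff_inter_eq_empty, disjoint_left]
          intro x hxZ hxD
          have := hZsub hxZ
          rw [Finset.mem_sdiff] at this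
          exact this.2 hxD
        rw [h1, h2, union_empty]
    · intro Y hY
      simp only [mem_coe] at hY
      rw [mem_filter] at hY
      dsimp only
      rw [← hY.2, union_comm, sdiff_union_inter]
    · intro Z hZ
      simp only [mem_coe] at hZ
      rw [mem_powersetCard] at hZ
      dsimp only
      rw [union_sdiff_distrib]
      have h1 : R \ D = ∅ := sdiff_eq_empty_iff_subset.mpr hR
      have h2 : Z \ D = Z := by
        rw [Finset.sdiff_eq_self_iff_disjoint, disjoint_left]
        intro x hxZ hxD
        have := hZ.1 hxZ
        rw [Finset.mem_sdiff] at this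
        exact this.2 hxD
      rw [h1, h2, empty_union]
  rw [key, card_powersetCard, card_univ_sdiff]




lemma count_one (B0 : Finset Ω) (L : ℕ) (hL : 1 ≤ L) :
    (((univ : Finset Ω).powersetCard L).filter (fun Y => (Y ∩ B0).card = 1)).card
      = B0.card * (Fintype.card Ω - B0.card).choose (L - 1) := by
  have hset : ((univ : Finset Ω).powersetCard L).filter (fun Y => (Y ∩ B0).card = 1)
      = B0.biUnion (fun x => ((univ : Finset Ω).powersetCard L).filter (fun Y => Y ∩ B0 = {x})) := by
    ext Y
    simp only [mem_filter, mem_biUnion]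
    constructor
    · rintro ⟨hP, hc⟩
      obtain ⟨x, hx⟩ := card_eq_one.mp hc
      refine ⟨x, ?_, hP, hx⟩
      have : x ∈ Y ∩ B0 := by rw [hx]; exact mem_singleton_self x
      exact (mem_inter.mp this).2
    · rintro ⟨x, _, hP, he⟩
      exact ⟨hP, by rw [he, card_singleton]⟩
  rw [hset, card_biUnion]
  · have : ∀ x ∈ B0, (((univ : Finset Ω).powersetCard L).filter (fun Y => Y ∩ B0 = {x})).card
        = (Fintype.card Ω - B0.card).choose (L - 1) := by
      intro x hx
      have h := count_fixed B0 {x} (singleton_subset_iff.mpr hx) L (by simpa using hL)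
      simpa using h
    rw [sum_congr rfl this, sum_const, smul_eq_mul]
  · intro x _ y _ hxy
    simp only [Function.onFun]
    rw [disjoint_left]
    intro Y hY hY2
    rw [mem_filter] at hY hY2
    apply hxy
    have := hY.2.symm.trans hY2.2
    exact singleton_injective this

lemma count_two (B1 B2 : Finset Ω) (hd : Disjoint B1 B2) (L : ℕ) (hL : 2 ≤ L) :
    (((univ : Finset Ω).powersetCard L).filter
        (fun Y => (Y ∩ B1).card = 1 ∧ (Y ∩ B2).card = 1)).card
      = B1.card * B2.card * (Fintype.card Ω - (B1 ∪ B2).card).choose (L - 2) := by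
  have hset : ((univ : Finset Ω).powersetCard L).filter
        (fun Y => (Y ∩ B1).card = 1 ∧ (Y ∩ B2).card = 1)
      = (B1 ×ˢ B2).biUnion (fun p => ((univ : Finset Ω).powersetCard L).filter
          (fun Y => Y ∩ (B1 ∪ B2) = {p.1, p.2})) := by
    ext Y
    simp only [mem_filter, mem_biUnion, mem_product]
    constructor
    · rintro ⟨hP, hc1, hc2⟩
      obtain ⟨x, hx⟩ := card_eq_one.mp hc1
      obtain ⟨y, hy⟩ := card_eq_one.mp hc2
      have hxB : x ∈ B1 := by
        have : x ∈ Y ∩ B1 := by rw [hx]; exact mem_singleton_self x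
        exact (mem_inter.mp this).2
      have hyB : y ∈ B2 := by
        have : y ∈ Y ∩ B2 := by rw [hy]; exact mem_singleton_self y
        exact (mem_inter.mp this).2
      refine ⟨(x, y), ⟨hxB, hyB⟩, hP, ?_⟩
      rw [inter_union_distrib_left, hx, hy]
      rfl
    · rintro ⟨⟨x, y⟩, ⟨hxB, hyB⟩, hP, he⟩
      have hxy : x ≠ y := fun h => (disjoint_left.mp hd hxB (h ▸ hyB))
      have h1 : Y ∩ B1 = {x} := by
        have : Y ∩ B1 = (Y ∩ (B1 ∪ B2)) ∩ B1 := by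
          rw [inter_assoc, union_inter_cancel_left]
        rw [this, he]
        ext z
        simp only [mem_inter, mem_insert, mem_singleton]
        constructor
        · rintro ⟨(rfl | rfl), hz⟩
          · rfl
          · exact absurd hz (disjoint_right.mp hd hyB)
        · rintro rfl
          exact ⟨Or.inl rfl, hxB⟩
      have h2 : Y ∩ B2 = {y} := by
        have : Y ∩ B2 = (Y ∩ (B1 ∪ B2)) ∩ B2 := by
          rw [inter_assoc, union_inter_cancel_right]
        rw [this, he]
        ext z
        simp only [mem_inter, mem_insert, mem_singleton]
        constructor
        · rintro ⟨(rfl | rfl), hz⟩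
          · exact absurd hz (disjoint_left.mp hd hxB)
          · rfl
        · rintro rfl
          exact ⟨Or.inr rfl, hyB⟩
      exact ⟨hP, by rw [h1, card_singleton], by rw [h2, card_singleton]⟩
  rw [hset, card_biUnion]
  · have hterm : ∀ p ∈ B1 ×ˢ B2, (((univ : Finset Ω).powersetCard L).filter
        (fun Y => Y ∩ (B1 ∪ B2) = {p.1, p.2})).card
        = (Fintype.card Ω - (B1 ∪ B2).card).choose (L - 2) := by
      rintro ⟨x, y⟩ hp
      rw [mem_product] at hp
      have hxy : x ≠ y := fun h => (disjoint_left.mp hd hp.1 (h ▸ hp.2))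
      have hsub : ({x, y} : Finset Ω) ⊆ B1 ∪ B2 := by
        intro z hz
        rw [mem_insert, mem_singleton] at hz
        rcases hz with rfl | rfl
        · exact mem_union_left _ hp.1
        · exact mem_union_right _ hp.2
      have hcard2 : ({x, y} : Finset Ω).card = 2 := by
        rw [card_insert_of_notMem (by simpa using hxy), card_singleton]
      have h := count_fixed (B1 ∪ B2) {x, y} hsub L (by rw [hcard2]; exact hL)
      rw [hcard2] at h
      exact h
    rw [sum_congr rfl hterm, sum_const, smul_eq_mul, card_product]
  · rintro ⟨x, y⟩ hp ⟨x', y'⟩ hp' hne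
    rw [mem_coe, mem_product] at hp hp'
    simp only [Function.onFun]
    rw [disjoint_left]
    intro Y hY hY2
    rw [mem_filter] at hY hY2
    apply hne
    have heq : ({x, y} : Finset Ω) = {x', y'} := hY.2.symm.trans hY2.2
    have hx : x = x' := by
      have : x ∈ ({x', y'} : Finset Ω) := heq ▸ mem_insert_self x {y}
      rw [mem_insert, mem_singleton] at this
      rcases this with rfl | rfl
      · rfl
      · exact absurd hp.1 (fun h => disjoint_left.mp hd h hp'.2)
    have hy : y = y' := by
      have : y ∈ ({x', y'} : Finset Ω) := heq ▸ (by simp : y ∈ ({x, y} : Finset Ω))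
      rw [mem_insert, mem_singleton] at this
      rcases this with rfl | rfl
      · exact absurd hp'.1 (fun h => disjoint_left.mp hd h hp.2)
      · rfl
    rw [hx, hy]






lemma sum_S {Lb M L : ℕ} (Bf : Fin Lb → Finset Ω) (hBcard : ∀ i, (Bf i).card = M)
    (hL : 1 ≤ L) :
    ∑ Y ∈ (univ : Finset Ω).powersetCard L, numSingleBuckets Bf Y
      = Lb * (M * (Fintype.card Ω - M).choose (L - 1)) := by
  have h1 : ∀ Y, numSingleBuckets Bf Y
      = ∑ i : Fin Lb, if (Y ∩ Bf i).card = 1 then 1 else 0 := by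
    intro Y
    rw [numSingleBuckets, card_filter]
  simp only [h1]
  rw [Finset.sum_comm]
  have h2 : ∀ i : Fin Lb, ∑ Y ∈ (univ : Finset Ω).powersetCard L,
      (if (Y ∩ Bf i).card = 1 then 1 else 0)
      = M * (Fintype.card Ω - M).choose (L - 1) := by
    intro i
    rw [← card_filter, count_one (Bf i) L hL, hBcard]
  rw [sum_congr rfl (fun i _ => h2 i), sum_const, card_univ, Fintype.card_fin, smul_eq_mul]

lemma sum_S2 {Lb M L : ℕ} (Bf : Fin Lb → Finset Ω) (hBcard : ∀ i, (Bf i).card = M)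
    (hdisj : ∀ i j, i ≠ j → Disjoint (Bf i) (Bf j)) (hL : 2 ≤ L) :
    ∑ Y ∈ (univ : Finset Ω).powersetCard L, (numSingleBuckets Bf Y)^2
      = Lb * (M * (Fintype.card Ω - M).choose (L - 1))
        + (Lb * (Lb - 1)) * (M * M * (Fintype.card Ω - 2*M).choose (L - 2)) := by
  have h1 : ∀ Y : Finset Ω, (numSingleBuckets Bf Y)^2
      = ∑ i : Fin Lb, ∑ j : Fin Lb,
          (if (Y ∩ Bf i).card = 1 ∧ (Y ∩ Bf j).card = 1 then 1 else 0) := by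
    intro Y
    rw [numSingleBuckets, card_filter, sq, Finset.sum_mul_sum]
    refine sum_congr rfl fun i _ => sum_congr rfl fun j _ => ?_
    by_cases hi : (Y ∩ Bf i).card = 1 <;> by_cases hj : (Y ∩ Bf j).card = 1 <;>
      simp [hi, hj]
  simp only [h1]
  rw [Finset.sum_comm]
  have h2 : ∀ i : Fin Lb,
      ∑ Y ∈ (univ : Finset Ω).powersetCard L, ∑ j : Fin Lb,
        (if (Y ∩ Bf i).card = 1 ∧ (Y ∩ Bf j).card = 1 then 1 else 0)
      = M * (Fintype.card Ω - M).choose (L - 1)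
        + (Lb - 1) * (M * M * (Fintype.card Ω - 2*M).choose (L - 2)) := by
    intro i
    rw [Finset.sum_comm]
    have hsplit : ∑ j : Fin Lb, ∑ Y ∈ (univ : Finset Ω).powersetCard L,
        (if (Y ∩ Bf i).card = 1 ∧ (Y ∩ Bf j).card = 1 then 1 else 0)
        = (∑ Y ∈ (univ : Finset Ω).powersetCard L,
            (if (Y ∩ Bf i).card = 1 ∧ (Y ∩ Bf i).card = 1 then 1 else 0))
          + ∑ j ∈ univ.erase i, ∑ Y ∈ (univ : Finset Ω).powersetCard L,
            (if (Y ∩ Bf i).card = 1 ∧ (Y ∩ Bf j).card = 1 then 1 else 0) := by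
      rw [← Finset.add_sum_erase _ _ (mem_univ i)]
    rw [hsplit]
    congr 1
    · simp only [and_self]
      rw [← card_filter, count_one (Bf i) L (by omega), hBcard]
    · have hterm : ∀ j ∈ univ.erase i,
          ∑ Y ∈ (univ : Finset Ω).powersetCard L,
            (if (Y ∩ Bf i).card = 1 ∧ (Y ∩ Bf j).card = 1 then 1 else 0)
          = M * M * (Fintype.card Ω - 2*M).choose (L - 2) := by
        intro j hj
        have hne : i ≠ j := (ne_of_mem_erase hj).symm
        rw [← card_filter, count_two (Bf i) (Bf j) (hdisj i j hne) L hL,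
          card_union_of_disjoint (hdisj i j hne), hBcard, hBcard]
        congr 2
        omega
      rw [sum_congr rfl hterm, sum_const, card_erase_of_mem (mem_univ i), card_univ,
        Fintype.card_fin, smul_eq_mul]
  rw [sum_congr rfl (fun i _ => h2 i), sum_const, card_univ, Fintype.card_fin, smul_eq_mul,
    mul_add]
  ring

set_option maxHeartbeats 2000000 in
open scoped Classical in
lemma main_bound {Ω : Type*} [Fintype Ω] [DecidableEq Ω] (L M : ℕ) (hL : 3 ≤ L) (hM : 2 ≤ M)
    (hcard : Fintype.card Ω = L * M) (Bf : Fin L → Finset Ω)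
    (hdisj : ∀ i j, i ≠ j → Disjoint (Bf i) (Bf j)) (hBcard : ∀ i, (Bf i).card = M) :
    1 - 2700/(L:ℝ) ≤
      ((((univ : Finset Ω).powersetCard L).filter
        (fun Y => (L:ℝ)/3 ≤ (numSingleBuckets Bf Y : ℝ))).card : ℝ)
        / (((univ : Finset Ω).powersetCard L).card : ℝ) := by
  have hM1 : 1 ≤ M := by omega
  have hL1 : 1 ≤ L := by omega
  have hL2 : 2 ≤ L := by omega
  set P := (univ : Finset Ω).powersetCard L with hP
  -- nat product rearrangements
  have e1 : M*(L-1) + M = M*L := by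
    have h : L - 1 + 1 = L := by omega
    calc M*(L-1) + M = M*((L-1)+1) := by ring
      _ = M*L := by rw [h]
  have e2 : M*(L-2) + M = M*(L-1) := by
    have h : L - 2 + 1 = L - 1 := by omega
    calc M*(L-2) + M = M*((L-2)+1) := by ring
      _ = M*(L-1) := by rw [h]
  have hUM : L*M - M = M*(L-1) := by
    rw [mul_comm L M, ← e1, Nat.add_sub_cancel]
  have hUM2 : M*(L-1) - M = L*M - 2*M := by
    rw [← e2, Nat.add_sub_cancel, two_mul, ← Nat.sub_sub, hUM, ← e2, Nat.add_sub_cancel]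
  have hLLM : L ≤ L*M := Nat.le_mul_of_pos_right _ (by omega)
  have hN : P.card = (L*M).choose L := by
    rw [hP, card_powersetCard, card_univ, hcard]
  have hNpos : 0 < (L*M).choose L := Nat.choose_pos hLLM
  have hch1pos : 0 < (L*M - M).choose (L-1) := by
    apply Nat.choose_pos
    rw [hUM]
    calc L - 1 = 1*(L-1) := (one_mul _).symm
      _ ≤ M*(L-1) := Nat.mul_le_mul_right _ hM1
  -- real quantities
  set Nr : ℝ := ((L*M).choose L : ℝ) with hNr
  set Ar : ℝ := (M : ℝ) * ((L*M - M).choose (L-1) : ℝ) with hAr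
  set C2r : ℝ := (M:ℝ)*(M:ℝ)*((L*M - 2*M).choose (L-2) : ℝ) with hC2r
  set P1 : ℝ := ∏ t ∈ Finset.range (M-1), (((M:ℝ)*L - L - t)/((M:ℝ)*L - 1 - t)) with hP1def
  have hLcast0 : ((L-1:ℕ):ℝ) = (L:ℝ) - 1 := by
    have : 1 ≤ L := by omega
    push_cast [this]; ring
  set Qv : ℝ := ∏ t ∈ Finset.range (M-1),
    (((M:ℝ)*((L:ℝ)-1) - ((L:ℝ)-1) - t)/((M:ℝ)*((L:ℝ)-1) - 1 - t)) with hQvdef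
  have hNrpos : (0:ℝ) < Nr := by rw [hNr]; exact_mod_cast hNpos
  have hch1posr : (0:ℝ) < ((L*M - M).choose (L-1) : ℝ) := by exact_mod_cast hch1pos
  have hArpos : (0:ℝ) < Ar := by
    rw [hAr]
    apply mul_pos _ hch1posr
    exact_mod_cast hM1
  -- p1 identity
  have hP1eq : Ar / Nr = P1 := by
    have h := ratio_eq M L hM1 hL1
    rw [mul_comm M L] at h
    exact h
  have hAreq : Ar = Nr * P1 := by
    rw [← hP1eq]; field_simp
  -- q identity
  have hQeq : C2r = Ar * Qv := by
    have h := ratio_eq M (L-1) hM1 (by omega)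
    rw [hUM2, ← hUM, hLcast0] at h
    rw [← hQvdef] at h
    have hidx : L - 1 - 1 = L - 2 := by omega
    rw [hidx] at h
    rw [div_eq_iff hch1posr.ne'] at h
    rw [hC2r, hAr]
    calc (M:ℝ)*(M:ℝ)*((L*M - 2*M).choose (L-2) : ℝ)
        = (M:ℝ) * ((M:ℝ)*((L*M - 2*M).choose (L-2) : ℝ)) := by ring
      _ = (M:ℝ) * (Qv * ((L*M - M).choose (L-1) : ℝ)) := by rw [h]
      _ = (M:ℝ) * ((L*M - M).choose (L-1) : ℝ) * Qv := by ring
  -- bounds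
  have hMRpos : (0:ℝ) < (M:ℝ) := by exact_mod_cast (by omega : 0 < M)
  have hLRpos : (0:ℝ) < (L:ℝ) := by exact_mod_cast (by omega : 0 < L)
  have hLR3 : (3:ℝ) ≤ (L:ℝ) := by exact_mod_cast hL
  have hMR2 : (2:ℝ) ≤ (M:ℝ) := by exact_mod_cast hM
  have hLcast : ((L-1:ℕ):ℝ) = (L:ℝ) - 1 := by
    push_cast [hL1]; ring
  have hlo0 : (0:ℝ) ≤ 1 - 1/(M:ℝ) := by
    have : 1/(M:ℝ) ≤ 1 := by rw [div_le_one hMRpos]; linarith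
    linarith
  have hP1lb : (1 - 1/(M:ℝ))^(M-1) ≤ P1 := prod_lb M L hM1 hL1
  have hP1pos : (0:ℝ) ≤ P1 := le_trans (pow_nonneg hlo0 _) hP1lb
  have hP1c : (11:ℝ)/30 ≤ P1 := le_trans (const_lb M hM) hP1lb
  have hP1ub : P1 ≤ 1 := by
    have h := prod_ub M L hM1 hL1
    have hu1 : (1 - ((L:ℝ)-1)/((M:ℝ)*L)) ≤ 1 := by
      have : (0:ℝ) ≤ ((L:ℝ)-1)/((M:ℝ)*L) := div_nonneg (by linarith) (by positivity)
      linarith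
    have hu0 : (0:ℝ) ≤ (1 - ((L:ℝ)-1)/((M:ℝ)*L)) := by
      have : ((L:ℝ)-1)/((M:ℝ)*L) ≤ 1 := by
        rw [div_le_one (by positivity)]
        nlinarith
      linarith
    exact le_trans h (pow_le_one₀ hu0 hu1)
  have hQlb : (0:ℝ) ≤ Qv := by
    have h := prod_lb M (L-1) hM1 (by omega)
    rw [hLcast0] at h
    rw [← hQvdef] at h
    exact le_trans (pow_nonneg hlo0 _) h
  -- upper bound for Qv and diff bound
  have hLm1pos : (0:ℝ) < (L:ℝ) - 1 := by linarith
  set u' : ℝ := 1 - ((L:ℝ)-2)/((M:ℝ)*((L:ℝ)-1)) with hu'def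
  have hQub : Qv ≤ u'^(M-1) := by
    have h := prod_ub M (L-1) hM1 (by omega)
    rw [hLcast0] at h
    rw [← hQvdef] at h
    have he : (1 - (((L:ℝ)-1)-1)/((M:ℝ)*((L:ℝ)-1))) = u' := by
      rw [hu'def]
      ring_nf
    rw [he] at h
    exact h
  have hQub1 : Qv ≤ 1 := by
    have hu1 : u' ≤ 1 := by
      have : (0:ℝ) ≤ ((L:ℝ)-2)/((M:ℝ)*((L:ℝ)-1)) := by
        apply div_nonneg (by linarith) (by positivity)
      rw [hu'def]; linarith
    have hu0 : (0:ℝ) ≤ u' := by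
      rw [hu'def]
      have : ((L:ℝ)-2)/((M:ℝ)*((L:ℝ)-1)) ≤ 1 := by
        rw [div_le_one (by positivity)]
        nlinarith
      linarith
    exact le_trans hQub (pow_le_one₀ hu0 hu1)
  have hdiff : Qv - P1 ≤ 2/(L:ℝ) := by
    have hlou : 1 - 1/(M:ℝ) ≤ u' := by
      rw [hu'def]
      have h1 : ((L:ℝ)-2)/((M:ℝ)*((L:ℝ)-1)) ≤ 1/(M:ℝ) := by
        rw [div_le_div_iff₀ (by positivity) hMRpos]
        nlinarith
      linarith
    have hu1 : u' ≤ 1 := by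
      have : (0:ℝ) ≤ ((L:ℝ)-2)/((M:ℝ)*((L:ℝ)-1)) := by
        apply div_nonneg (by linarith) (by positivity)
      rw [hu'def]; linarith
    have hpd := pow_diff_le u' (1 - 1/(M:ℝ)) hlo0 hlou hu1 (M-1)
    have hMm1cast : ((M-1:ℕ):ℝ) = (M:ℝ) - 1 := by push_cast [hM1]; ring
    have hstep : ((M:ℝ)-1) * (u' - (1 - 1/(M:ℝ))) ≤ 2/(L:ℝ) := by
      have he : u' - (1 - 1/(M:ℝ)) = 1/((M:ℝ)*((L:ℝ)-1)) := by
        rw [hu'def]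
        field_simp
        ring
      rw [he, mul_one_div, div_le_div_iff₀ (by positivity) hLRpos]
      nlinarith [mul_nonneg (by linarith : (0:ℝ) ≤ (L:ℝ)-2) (by linarith : (0:ℝ) ≤ (M:ℝ))]
    calc Qv - P1 ≤ u'^(M-1) - (1 - 1/(M:ℝ))^(M-1) := by
          have := hQub
          have := hP1lb
          linarith
      _ ≤ ((M-1:ℕ):ℝ) * (u' - (1 - 1/(M:ℝ))) := hpd
      _ ≤ 2/(L:ℝ) := by rw [hMm1cast]; exact hstep
  -- sums
  have hS1 : ∑ Y ∈ P, (numSingleBuckets Bf Y : ℝ) = (L:ℝ) * Ar := by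
    have h := sum_S (M := M) (L := L) Bf hBcard hL1
    rw [hcard] at h
    have := congrArg (fun x : ℕ => (x : ℝ)) h
    push_cast at this
    rw [hP, this, hAr]
  have hS2 : ∑ Y ∈ P, ((numSingleBuckets Bf Y : ℝ))^2
      = (L:ℝ)*Ar + (L:ℝ)*((L:ℝ)-1)*C2r := by
    have h := sum_S2 (M := M) (L := L) Bf hBcard hdisj hL2
    rw [hcard] at h
    have hc := congrArg (fun x : ℕ => (x : ℝ)) h
    push_cast [hL1] at hc
    rw [hP, hc, hAr, hC2r]
  -- Chebyshev
  set c : ℝ := (L:ℝ) * P1 with hcdef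
  have hPcard : (P.card : ℝ) = Nr := by rw [hN]
  have hexpand : ∑ Y ∈ P, ((numSingleBuckets Bf Y : ℝ) - c)^2
      = ∑ Y ∈ P, ((numSingleBuckets Bf Y : ℝ))^2 - 2*c*∑ Y ∈ P, (numSingleBuckets Bf Y : ℝ)
        + Nr * c^2 := by
    have hterm : ∀ Y ∈ P, ((numSingleBuckets Bf Y : ℝ) - c)^2
        = ((numSingleBuckets Bf Y : ℝ))^2 - (2*c)*(numSingleBuckets Bf Y : ℝ) + c^2 := by
      intro Y _; ring
    rw [sum_congr rfl hterm, sum_add_distrib, sum_sub_distrib, ← mul_sum, sum_const,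
      nsmul_eq_mul, hPcard]
  have key2 : (L:ℝ)*(P1*(Qv - P1)) ≤ 2 := by
    rcases le_or_gt Qv P1 with h | h
    · have : P1*(Qv - P1) ≤ 0 := mul_nonpos_of_nonneg_of_nonpos hP1pos (by linarith)
      nlinarith
    · have h1 : P1*(Qv - P1) ≤ Qv - P1 := by nlinarith
      have h2 : (L:ℝ)*(Qv - P1) ≤ 2 := by
        calc (L:ℝ)*(Qv-P1) ≤ (L:ℝ)*(2/(L:ℝ)) := by
              apply mul_le_mul_of_nonneg_left hdiff hLRpos.le
          _ = 2 := by field_simp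
      nlinarith
  have hinner : P1 + ((L:ℝ)-1)*P1*Qv - (L:ℝ)*P1^2 ≤ 3 := by
    have h3 : P1*(1-Qv) ≤ 1 := by nlinarith
    have hre : P1 + ((L:ℝ)-1)*P1*Qv - (L:ℝ)*P1^2
        = P1*(1-Qv) + (L:ℝ)*(P1*(Qv-P1)) := by ring
    rw [hre]
    linarith
  have hvar : ∑ Y ∈ P, ((numSingleBuckets Bf Y : ℝ) - c)^2 ≤ 3*(L:ℝ)*Nr := by
    rw [hexpand, hS1, hS2, hQeq, hAreq, hcdef]
    have hfact : (L:ℝ)*(Nr*P1) + (L:ℝ)*((L:ℝ)-1)*(Nr*P1*Qv)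
        - 2*((L:ℝ)*P1)*((L:ℝ)*(Nr*P1)) + Nr*((L:ℝ)*P1)^2
        = Nr*(L:ℝ)*(P1 + ((L:ℝ)-1)*P1*Qv - (L:ℝ)*P1^2) := by ring
    have hNL0 : (0:ℝ) ≤ Nr*(L:ℝ) := by positivity
    have := mul_le_mul_of_nonneg_left hinner hNL0
    nlinarith [this]
  -- bad set
  set bad := P.filter (fun Y => ¬ ((L:ℝ)/3 ≤ (numSingleBuckets Bf Y : ℝ))) with hbad
  have hper : ∀ Y ∈ bad, ((L:ℝ)/30)^2 ≤ ((numSingleBuckets Bf Y : ℝ) - c)^2 := by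
    intro Y hY
    rw [hbad, mem_filter] at hY
    have hS : (numSingleBuckets Bf Y : ℝ) < (L:ℝ)/3 := by linarith [not_le.mp hY.2]
    have hc1 : (11:ℝ)/30*(L:ℝ) ≤ c := by
      rw [hcdef]
      nlinarith
    have h1 : (L:ℝ)/30 ≤ c - (numSingleBuckets Bf Y : ℝ) := by linarith
    calc ((L:ℝ)/30)^2 ≤ (c - (numSingleBuckets Bf Y : ℝ))^2 := by
          apply pow_le_pow_left₀ (by positivity) h1
      _ = ((numSingleBuckets Bf Y : ℝ) - c)^2 := by ring
  have hbadcard : (bad.card : ℝ) * ((L:ℝ)/30)^2 ≤ 3*(L:ℝ)*Nr := by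
    calc (bad.card : ℝ) * ((L:ℝ)/30)^2
        ≤ ∑ Y ∈ bad, ((numSingleBuckets Bf Y : ℝ) - c)^2 := by
          rw [← nsmul_eq_mul]
          exact Finset.card_nsmul_le_sum bad _ _ hper
      _ ≤ ∑ Y ∈ P, ((numSingleBuckets Bf Y : ℝ) - c)^2 := by
          apply sum_le_sum_of_subset_of_nonneg (filter_subset _ _)
          intro Y _ _
          positivity
      _ ≤ 3*(L:ℝ)*Nr := hvar
  have hbadle : (bad.card : ℝ) * (L:ℝ) ≤ 2700*Nr := by
    have hb2 : (bad.card : ℝ) * ((L:ℝ)/30)^2 = ((bad.card:ℝ)*(L:ℝ)*(L:ℝ))/900 := by ring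
    rw [hb2] at hbadcard
    have h1 : ((bad.card : ℝ) * (L:ℝ)) * (L:ℝ) ≤ (2700*Nr) * (L:ℝ) := by linarith
    exact le_of_mul_le_mul_right h1 hLRpos
  -- conclude
  have hsplit : (P.filter (fun Y => (L:ℝ)/3 ≤ (numSingleBuckets Bf Y : ℝ))).card + bad.card
      = P.card := by
    rw [hbad]
    exact card_filter_add_card_filter_not _
  have hPpos : (0:ℝ) < ((P.card : ℕ):ℝ) := by rw [hPcard]; exact hNrpos
  rw [le_div_iff₀ hPpos]
  have hgood : ((P.filter (fun Y => (L:ℝ)/3 ≤ (numSingleBuckets Bf Y : ℝ))).card : ℝ)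
      = (P.card : ℝ) - (bad.card : ℝ) := by
    have := congrArg (fun x : ℕ => (x:ℝ)) hsplit
    push_cast at this
    linarith
  rw [hgood, hPcard]
  have hexp : (1 - 2700/(L:ℝ)) * Nr = Nr - (2700*Nr)/(L:ℝ) := by
    field_simp
  rw [hexp]
  have : (bad.card : ℝ) ≤ (2700*Nr)/(L:ℝ) := by
    rw [le_div_iff₀ hLRpos]
    exact hbadle
  linarith

open scoped Classical in
theorem stmt_15 (l m : ℕ → ℕ) (hlpos : ∀ n, 0 < l n) (hmpos : ∀ n, 0 < m n)
    (hl : Tendsto l atTop atTop) (hm : Tendsto m atTop atTop)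
    (B : ∀ n, Fin (l n) → Finset (Fin (l n * m n)))
    (hdisj : ∀ n, ∀ i j, i ≠ j → Disjoint (B n i) (B n j))
    (hcover : ∀ n, ∀ x, ∃ i, x ∈ B n i)
    (hBcard : ∀ n i, (B n i).card = m n) :
    -- P[at least lₙ/3 buckets contain exactly one element of Yₙ] → 1,
    -- for Yₙ a uniformly random lₙ-element subset
    Tendsto (fun n =>
        (((((Finset.univ : Finset (Fin (l n * m n))).powersetCard (l n)).filter
            (fun Y => (l n : ℝ) / 3 ≤ (numSingleBuckets (B n) Y : ℝ))).card : ℝ))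
          / ((((Finset.univ : Finset (Fin (l n * m n))).powersetCard (l n)).card : ℝ)))
      atTop (nhds 1) := by
  have hlow : Tendsto (fun n => 1 - 2700/(l n : ℝ)) atTop (nhds 1) := by
    have h0 : Tendsto (fun n => (2700:ℝ)/(l n : ℝ)) atTop (nhds 0) :=
      Tendsto.div_atTop tendsto_const_nhds (tendsto_natCast_atTop_atTop.comp hl)
    have := (tendsto_const_nhds (x := (1:ℝ)) (f := atTop (α := ℕ))).sub h0
    simpa using this
  apply tendsto_of_tendsto_of_tendsto_of_le_of_le' hlow tendsto_const_nhds
  · filter_upwards [hl.eventually_ge_atTop 3, hm.eventually_ge_atTop 2] with n h3 h2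
    exact main_bound (l n) (m n) h3 h2 (Fintype.card_fin _) (B n) (hdisj n) (hBcard n)
  · filter_upwards with n
    apply div_le_one_of_le₀
    · exact_mod_cast Finset.card_le_card (filter_subset _ _)
    · positivity
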